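/- If P is a monic polynomial of degree m over C satisfying 22 P P'''' + 45 (P'')^2 - 66 P' P''' = 0, then m(m-1)(m-11)(m-12) = 0; in particular m is 0, 1, 11, or 12. -/

import Mathlib

open Polynomial

theorem ODE_forces_degree (m : ℕ) (P : ℂ[X]) (hmonic : P.Monic) (hdeg : P.natDegree = m)
    (hODE : 22 * P * (derivative (derivative (derivative (derivative P)))) +
      45 * (derivative (derivative P))^2 -
        66 * (derivative P) * (derivative (derivative (derivative P))) = 0) :
    m = 0 ∨ m = 1 ∨ m = 11 ∨ m = 12 := by
  have e1 : derivative P = derivative^[1] P := rfl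
  have e2 : derivative (derivative P) = derivative^[2] P := rfl
  have e3 : derivative (derivative (derivative P)) = derivative^[3] P := rfl
  have e4 : derivative (derivative (derivative (derivative P))) = derivative^[4] P := rfl
  have hcm : P.coeff m = 1 := by rw [← hdeg]; exact hmonic.coeff_natDegree
  have hdP : P.natDegree ≤ m := le_of_eq hdeg
  have hd1 : (derivative^[1] P).natDegree ≤ m - 1 := by
    rw [← hdeg]; exact natDegree_iterate_derivative P 1
  have hd2 : (derivative^[2] P).natDegree ≤ m - 2 := by
    rw [← hdeg]; exact natDegree_iterate_derivative P 2
  have hd3 : (derivative^[3] P).natDegree ≤ m - 3 := by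
    rw [← hdeg]; exact natDegree_iterate_derivative P 3
  have hd4 : (derivative^[4] P).natDegree ≤ m - 4 := by
    rw [← hdeg]; exact natDegree_iterate_derivative P 4
  rw [e4, e3, e2, e1] at hODE
  rcases Nat.lt_or_ge m 4 with hm | hm
  · interval_cases m
    · exact Or.inl rfl
    · exact Or.inr (Or.inl rfl)
    · -- m = 2 : contradiction
      exfalso
      have hD2 : derivative^[2] P = C 2 := by
        have h0 := (derivative^[2] P).eq_C_of_natDegree_le_zero (by simpa using hd2)
        rw [h0, coeff_iterate_derivative]
        norm_num [Nat.descFactorial, hcm]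
      have hD3 : derivative^[3] P = 0 := by
        rw [Function.iterate_succ_apply', hD2, derivative_C]
      have hD4 : derivative^[4] P = 0 := by
        rw [Function.iterate_succ_apply', hD3, map_zero]
      rw [hD2, hD3, hD4] at hODE
      simp only [mul_zero, zero_add, sub_zero] at hODE
      have key := congrArg (fun q => q.coeff 0) hODE
      simp [coeff_C] at key
      rw [← C_pow, coeff_C] at key
      norm_num at key
    · -- m = 3 : contradiction
      exfalso
      have hD3 : derivative^[3] P = C 6 := by
        have h0 := (derivative^[3] P).eq_C_of_natDegree_le_zero (by simpa using hd3)
        rw [h0, coeff_iterate_derivative]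
        norm_num [Nat.descFactorial, hcm]
      have hD4 : derivative^[4] P = 0 := by
        rw [Function.iterate_succ_apply', hD3, derivative_C]
      rw [hD4, mul_zero] at hODE
      have key := congrArg (fun q => q.coeff 2) hODE
      simp only [coeff_add, coeff_sub, coeff_zero, zero_add] at key
      rw [sq, mul_assoc 66] at key
      rw [coeff_ofNat_mul, coeff_ofNat_mul] at key
      have c1 : ((derivative^[2] P) * (derivative^[2] P)).coeff 2
          = (derivative^[2] P).coeff 1 * (derivative^[2] P).coeff 1 :=
        coeff_mul_add_eq_of_natDegree_le (df := 1) (dg := 1) (by simpa using hd2) (by simpa using hd2)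
      have c2 : ((derivative^[1] P) * (derivative^[3] P)).coeff 2
          = (derivative^[1] P).coeff 2 * (derivative^[3] P).coeff 0 :=
        coeff_mul_add_eq_of_natDegree_le (df := 2) (dg := 0) (by simpa using hd1) (by simpa using hd3)
      rw [c1, c2, coeff_iterate_derivative, coeff_iterate_derivative,
        coeff_iterate_derivative] at key
      norm_num [Nat.descFactorial, hcm] at key
  · -- main case m ≥ 4
    have key := congrArg (fun q => q.coeff (2 * m - 4)) hODE
    simp only [coeff_add, coeff_sub, coeff_zero] at key
    rw [mul_assoc 22, sq, mul_assoc 66] at key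
    rw [coeff_ofNat_mul, coeff_ofNat_mul, coeff_ofNat_mul] at key
    rw [show 2 * m - 4 = m + (m - 4) from by omega,
      coeff_mul_add_eq_of_natDegree_le hdP hd4] at key
    rw [show m + (m - 4) = (m - 2) + (m - 2) from by omega,
      coeff_mul_add_eq_of_natDegree_le hd2 hd2] at key
    rw [show (m - 2) + (m - 2) = (m - 1) + (m - 3) from by omega,
      coeff_mul_add_eq_of_natDegree_le hd1 hd3] at key
    rw [coeff_iterate_derivative, coeff_iterate_derivative, coeff_iterate_derivative,
      coeff_iterate_derivative] at key
    rw [show m - 4 + 4 = m from by omega, show m - 2 + 2 = m from by omega,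
      show m - 1 + 1 = m from by omega, show m - 3 + 3 = m from by omega, hcm] at key
    obtain ⟨n, rfl⟩ : ∃ n, m = n + 4 := ⟨m - 4, by omega⟩
    simp only [Nat.descFactorial, nsmul_eq_mul, smul_eq_mul, mul_one] at key
    push_cast at key
    have hx : (((n : ℂ) + 4) * ((n : ℂ) + 3)) * (((n : ℂ) - 7) * ((n : ℂ) - 8)) = 0 := by
      linear_combination key
    have h4 : ((n : ℂ) + 4) ≠ 0 := by
      have : ((n + 4 : ℕ) : ℂ) ≠ 0 := Nat.cast_ne_zero.2 (by omega)
      exact_mod_cast this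
    have h3 : ((n : ℂ) + 3) ≠ 0 := by
      have : ((n + 3 : ℕ) : ℂ) ≠ 0 := Nat.cast_ne_zero.2 (by omega)
      exact_mod_cast this
    rcases mul_eq_zero.1 hx with h | h
    · exact absurd (mul_eq_zero.1 h) (by simp [h4, h3])
    · rcases mul_eq_zero.1 h with h | h
      · have : n = 7 := by
          have : (n : ℂ) = 7 := by linear_combination h
          exact_mod_cast this
        subst this; exact Or.inr (Or.inr (Or.inl rfl))
      · have : n = 8 := by
          have : (n : ℂ) = 8 := by linear_combination h
          exact_mod_cast this
        subst this; exact Or.inr (Or.inr (Or.inr rfl))
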